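/- If R is a centrally essential semiperfect ring with center C, then the socle of R as a C-module is contained in C. -/

import Mathlib

/-- A ring is *centrally essential* if, as a module over its center, it is an
essential extension of its center. -/
def IsCentrallyEssential (R : Type*) [Ring R] : Prop :=
  ∀ r : R, r ≠ 0 → ∃ c ∈ Subring.center R, c * r ≠ 0 ∧ c * r ∈ Subring.center R

/-- A ring is *semiperfect* if `R/J(R)` is semisimple (expressed via a
surjective ring homomorphism with kernel `J(R)` onto a semisimple ring) and
idempotents lift modulo `J(R)`. -/
def IsSemiperfectRing (R : Type*) [Ring R] : Prop :=
  (∃ (S : Type) (_ : Ring S) (_ : IsSemisimpleRing S) (f : R →+* S),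
      Function.Surjective f ∧ RingHom.ker f = Ideal.jacobson (⊥ : Ideal R)) ∧
    ∀ x : R, x * x - x ∈ Ideal.jacobson (⊥ : Ideal R) →
      ∃ e : R, e * e = e ∧ e - x ∈ Ideal.jacobson (⊥ : Ideal R)

/-- The socle of `R` as a module over its center: the sum of all simple
submodules of `R` over `C(R)`. -/
def centerSocle (R : Type*) [Ring R] : Submodule (Subring.center R) R :=
  sSup {S : Submodule (Subring.center R) R | IsSimpleModule (Subring.center R) S}

/-- The center as a submodule of `R` over the center. -/
def centerSubmodule (R : Type*) [Ring R] : Submodule (Subring.center R) R where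
  carrier := Subring.center R
  add_mem' := fun h1 h2 => add_mem h1 h2
  zero_mem' := zero_mem _
  smul_mem' := fun c x hx => by
    have : (c : R) * x ∈ Subring.center R := mul_mem c.2 hx
    simpa [Subring.smul_def] using this

/-- If `R` is a centrally essential semiperfect ring with center `C`, then
`Soc(R_C) ⊆ C`. -/

theorem centerSocle_le_center_of_centrallyEssential_semiperfect
    (R : Type*) [Ring R] (hR : IsCentrallyEssential R)
    (hsp : IsSemiperfectRing R) :
    ∀ x ∈ centerSocle R, x ∈ Subring.center R := by
  have h : centerSocle R ≤ centerSubmodule R := by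
    apply sSup_le
    intro S hS
    have hatom : IsAtom S := isSimpleModule_iff_isAtom.mp hS
    -- S ⊓ center ≠ ⊥
    have hne : S ⊓ centerSubmodule R ≠ ⊥ := by
      obtain ⟨x, hxS, hx0⟩ := Submodule.exists_mem_ne_zero_of_ne_bot hatom.1
      obtain ⟨c, hcC, hc0, hcc⟩ := hR x hx0
      intro hbot
      have hmem : (⟨c, hcC⟩ : Subring.center R) • x ∈ S ⊓ centerSubmodule R := by
        constructor
        · exact S.smul_mem _ hxS
        · simpa [Subring.smul_def] using (show c * x ∈ centerSubmodule R from hcc)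
      rw [hbot] at hmem
      exact hc0 (by simpa [Subring.smul_def] using hmem)
    have hle : S ⊓ centerSubmodule R ≤ S := inf_le_left
    rcases lt_or_eq_of_le hle with hlt | heq
    · exact absurd (hatom.2 _ hlt) hne
    · exact heq ▸ inf_le_right
  exact fun x hx => h hx
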